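/- Consider allocating (n−1)/2 identical items, each of cost 1 to every agent, among n agents (n odd, n ≥ 2). For any partition X of the items into n bundles, the total subsidy ∑_i max{c(X_i) − (n−1)/(2n), 0} is at least (n²−1)/(4n). -/
import Mathlib


open Finset

/-- Allocating `(n-1)/2` identical unit-cost items among `n` agents (`n` odd, `n ≥ 2`):
for any allocation `X`, the total subsidy `∑ i, max (c(X_i) - (n-1)/(2n)) 0` needed
for proportionality is at least `(n² - 1)/(4n)`. -/
theorem prop_chores_lower_bound_odd (n : ℕ) (hn : 2 ≤ n) (hodd : Odd n)
    (X : Fin ((n - 1) / 2) → Fin n) :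
    ((n : ℝ) ^ 2 - 1) / (4 * n) ≤
      ∑ i : Fin n,
        max (((Finset.univ.filter fun e => X e = i).card : ℝ) - ((n : ℝ) - 1) / (2 * n)) 0 := by
  obtain ⟨t, ht⟩ := hodd
  have hnR : ((n : ℝ)) = 2 * t + 1 := by exact_mod_cast congrArg (Nat.cast (R := ℝ)) ht
  have hn0 : (0:ℝ) < n := by positivity
  have ht1 : 1 ≤ t := by omega
  have hm : (n - 1) / 2 = t := by omega
  -- total number of items
  have hsum : ∑ i : Fin n, (Finset.univ.filter fun e => X e = i).card = (n - 1) / 2 := by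
    have h := Finset.card_eq_sum_card_fiberwise (f := X) (s := Finset.univ)
      (t := Finset.univ) (fun x _ => mem_univ _)
    simpa using h.symm
  have key : ∀ i : Fin n,
      ((Finset.univ.filter fun e => X e = i).card : ℝ) * (((n:ℝ) + 1) / (2 * n)) ≤
        max (((Finset.univ.filter fun e => X e = i).card : ℝ) - ((n : ℝ) - 1) / (2 * n)) 0 := by
    intro i
    set k : ℕ := (Finset.univ.filter fun e => X e = i).card with hk
    rcases Nat.eq_zero_or_pos k with h | h
    · simp [h]
    · have hk1 : (1:ℝ) ≤ k := by exact_mod_cast h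
      have heq : (k:ℝ) * (((n:ℝ) + 1) / (2 * n)) =
          (k:ℝ) - ((k:ℝ) * ((n:ℝ) - 1)) / (2 * n) := by
        field_simp
        ring
      have hle : (k:ℝ) * (((n:ℝ) + 1) / (2 * n)) ≤ (k:ℝ) - ((n : ℝ) - 1) / (2 * n) := by
        rw [heq]
        have h1 : ((n:ℝ) - 1) / (2 * n) ≤ ((k:ℝ) * ((n:ℝ) - 1)) / (2 * n) := by
          apply div_le_div_of_nonneg_right _ (by positivity)
          nlinarith
        linarith
      exact hle.trans (le_max_left _ _)
  calc ((n : ℝ) ^ 2 - 1) / (4 * n)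
      = (((n - 1) / 2 : ℕ) : ℝ) * (((n:ℝ) + 1) / (2 * n)) := by
        rw [hm, hnR]
        field_simp
        ring
    _ = (∑ i : Fin n, ((Finset.univ.filter fun e => X e = i).card : ℝ)) *
          (((n:ℝ) + 1) / (2 * n)) := by
        congr 1; rw [← Nat.cast_sum]; exact_mod_cast congrArg (Nat.cast (R := ℝ)) hsum.symm
    _ = ∑ i : Fin n, ((Finset.univ.filter fun e => X e = i).card : ℝ) *
          (((n:ℝ) + 1) / (2 * n)) := by rw [Finset.sum_mul]
    _ ≤ _ := Finset.sum_le_sum fun i _ => key i
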